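/- Let (M, N) be a controllable pair with M ∈ ℝ^{s×s} Hurwitz and N ∈ ℝ^{s×1}, let Φ be the companion matrix of a polynomial P(λ) = λˢ − ϱ_s λ^{s−1} − ⋯ − ϱ₁ whose roots are distinct with zero real part, and Γ = e₁ᵀ (first standard basis row vector). Then the unique solution T of TΦ − MT = NΓ is nonsingular. -/

import Mathlib

open Matrix Polynomial Finset

open Matrix Polynomial Finset

lemma syl_pow {s : ℕ} (M Φ T R : Matrix (Fin s) (Fin s) ℝ)
    (hT : T * Φ = M * T + R) (k : ℕ) :
    T * Φ ^ k = M ^ k * T + ∑ j ∈ Finset.range k, M ^ (k - 1 - j) * R * Φ ^ j := by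
  induction k with
  | zero => simp
  | succ k ih =>
    have step : ∀ j ∈ Finset.range k,
        (M ^ (k - 1 - j) * R * Φ ^ j) * Φ = M ^ (k - (j+1)) * R * Φ ^ (j+1) := by
      intro j hj
      rw [mul_assoc, ← pow_succ]
      congr 3
      omega
    rw [pow_succ, ← mul_assoc, ih, add_mul, Finset.sum_mul, mul_assoc _ T Φ, hT,
      Finset.sum_congr rfl step, Finset.sum_range_succ']
    simp only [Nat.sub_zero, pow_zero, mul_one, pow_succ, Nat.add_sub_cancel, mul_add, mul_assoc]
    abel

lemma gamma_pow {s : ℕ} (ϱ : Fin s → ℝ)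
    (Φ : Matrix (Fin s) (Fin s) ℝ)
    (hΦ : Φ = Matrix.of fun i j : Fin s => if (i:ℕ) + 1 = (j:ℕ) then 1
      else if (i:ℕ) = s - 1 then ϱ j else 0)
    (Γ : Matrix (Fin 1) (Fin s) ℝ)
    (hΓ : Γ = Matrix.of fun _ (j : Fin s) => if (j:ℕ) = 0 then (1:ℝ) else 0) :
    ∀ j, j < s → ∀ l : Fin s, (Γ * Φ ^ j) 0 l = if (l:ℕ) = j then 1 else 0 := by
  intro j
  induction j with
  | zero => intro _ l; simp [hΓ]
  | succ j ih =>
    intro hj l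
    have hj' : j < s := by omega
    have key : ∀ m : Fin s, (Γ * Φ ^ j) 0 m = if m = (⟨j, hj'⟩ : Fin s) then 1 else 0 := by
      intro m
      rw [ih hj' m]
      congr 1
      simp [Fin.ext_iff]
    rw [pow_succ, ← Matrix.mul_assoc, Matrix.mul_apply]
    simp only [key, ite_mul, one_mul, zero_mul]
    rw [Finset.sum_ite_eq' Finset.univ (⟨j, hj'⟩ : Fin s) (fun m => Φ m l),
      if_pos (Finset.mem_univ _)]
    rw [hΦ]
    simp only [Matrix.of_apply]
    have : (j:ℕ) ≠ s - 1 := by omega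
    simp only [this, if_false]
    congr 1
    simp [eq_comm]

open Matrix Polynomial Finset

lemma eval_charpoly'' {n : ℕ} (A : Matrix (Fin n) (Fin n) ℂ) (r : ℂ) :
    A.charpoly.eval r = (Matrix.scalar (Fin n) r - A).det := by
  rw [Matrix.charpoly, _root_.eval_det, matPolyEquiv_charmatrix]
  simp

lemma scalar_eq_algebraMap {n : ℕ} (r : ℂ) :
    Matrix.scalar (Fin n) r = algebraMap ℂ (Matrix (Fin n) (Fin n) ℂ) r := by
  rw [Matrix.scalar_apply, Matrix.algebraMap_eq_diagonal]
  rfl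

lemma det_aeval_unit {s : ℕ} (M Φ : Matrix (Fin s) (Fin s) ℝ)
    (hM : ∀ μ ∈ spectrum ℂ (M.map Complex.ofReal), μ.re < 0)
    (hIm : ∀ μ ∈ spectrum ℂ (Φ.map Complex.ofReal), μ.re = 0) :
    IsUnit (Polynomial.aeval Φ M.charpoly).det := by
  set χ := M.charpoly with hχ
  set MC := M.map Complex.ofReal with hMCdef
  set ΦC := Φ.map Complex.ofReal with hΦCdef
  set χC : Polynomial ℂ := χ.map (algebraMap ℝ ℂ) with hχC
  have hmap : ((Polynomial.aeval Φ χ).map Complex.ofReal) = Polynomial.aeval ΦC χC := by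
    rw [hχC, Polynomial.aeval_map_algebraMap]
    have h2 := Polynomial.aeval_algHom_apply
      (Complex.ofRealAm.mapMatrix : Matrix (Fin s) (Fin s) ℝ →ₐ[ℝ] Matrix (Fin s) (Fin s) ℂ) Φ χ
    simpa [AlgHom.mapMatrix_apply, Complex.ofRealAm_coe, hΦCdef] using h2.symm
  have hdet : ((Polynomial.aeval Φ χ).det : ℂ) = (Polynomial.aeval ΦC χC).det := by
    rw [← hmap]
    exact (RingHom.map_det Complex.ofRealHom _)
  have hMC : MC.charpoly = χC := by
    rw [hχC, hχ, hMCdef]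
    exact (Matrix.charpoly_map M Complex.ofRealHom)
  have hmonic : χ.Monic := M.charpoly_monic
  have hCmonic : χC.Monic := hmonic.map _
  have hcard : χC.roots.card = χC.natDegree :=
    Polynomial.splits_iff_card_roots.mp (IsAlgClosed.splits χC)
  have hfact := Polynomial.prod_multiset_X_sub_C_of_monic_of_roots_card_eq hCmonic hcard
  have hroot_ne : ∀ r ∈ χC.roots, (Polynomial.aeval ΦC (X - C r)).det ≠ 0 := by
    intro r hr
    have hroot : χC.eval r = 0 := (Polynomial.mem_roots'.mp hr).2
    have hrspec : r ∈ spectrum ℂ MC := by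
      rw [spectrum.mem_iff]
      intro hu
      have hdu := (Matrix.isUnit_iff_isUnit_det _).mp hu
      rw [← scalar_eq_algebraMap] at hdu
      rw [← eval_charpoly'', hMC, hroot] at hdu
      exact not_isUnit_zero hdu
    have hre : r.re < 0 := hM r hrspec
    have hnspec : r ∉ spectrum ℂ ΦC := fun h => by
      have := hIm r h; linarith
    have hu : IsUnit ((algebraMap ℂ (Matrix (Fin s) (Fin s) ℂ)) r - ΦC) :=
      spectrum.notMem_iff.mp hnspec
    have hav : Polynomial.aeval ΦC (X - C r)
        = -(((algebraMap ℂ (Matrix (Fin s) (Fin s) ℂ)) r) - ΦC) := by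
      simp [map_sub]
    rw [hav]
    have := (Matrix.isUnit_iff_isUnit_det _).mp hu.neg
    exact this.ne_zero
  have hfact' : ((χC.roots.toList).map (fun a => X - C a)).prod = χC := by
    have h := hfact
    rw [← Multiset.coe_toList χC.roots, Multiset.map_coe, Multiset.prod_coe] at h
    exact h
  have hne : (Polynomial.aeval ΦC χC).det ≠ 0 := by
    rw [← hfact', map_list_prod (Polynomial.aeval ΦC), ← Matrix.coe_detMonoidHom,
      map_list_prod (Matrix.detMonoidHom (n := Fin s) (R := ℂ)), List.map_map, List.map_map]
    apply List.prod_ne_zero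
    intro h0
    rw [List.mem_map] at h0
    obtain ⟨r, hr, hr0⟩ := h0
    exact hroot_ne r (Multiset.mem_toList.mp hr) hr0
  have : ((Polynomial.aeval Φ χ).det : ℂ) ≠ 0 := by rw [hdet]; exact hne
  have hne' : (Polynomial.aeval Φ χ).det ≠ 0 := fun h => this (by rw [h]; simp)
  exact isUnit_iff_ne_zero.mpr hne'

theorem stmt4 (s : ℕ) (hs : 0 < s) (M : Matrix (Fin s) (Fin s) ℝ)
    (N : Matrix (Fin s) (Fin 1) ℝ) (ϱ : Fin s → ℝ)
    (Φ : Matrix (Fin s) (Fin s) ℝ)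
    (hΦ : Φ = Matrix.of fun i j : Fin s => if (i:ℕ) + 1 = (j:ℕ) then 1
      else if (i:ℕ) = s - 1 then ϱ j else 0)
    (Γ : Matrix (Fin 1) (Fin s) ℝ)
    (hΓ : Γ = Matrix.of fun _ (j : Fin s) => if (j:ℕ) = 0 then (1:ℝ) else 0)
    (hM : ∀ μ ∈ spectrum ℂ (M.map Complex.ofReal), μ.re < 0)
    (hroots : ((Φ.map Complex.ofReal).charpoly).Separable)
    (hrootsIm : ∀ μ ∈ spectrum ℂ (Φ.map Complex.ofReal), μ.re = 0)
    (hctrl : IsUnit (Matrix.of fun i j : Fin s => ((M ^ (j:ℕ)) * N) i 0).det)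
    (T : Matrix (Fin s) (Fin s) ℝ) (hT : T * Φ - M * T = N * Γ) :
    IsUnit T.det := by
  classical
  set χ := M.charpoly with hχdef
  have hmonic : χ.Monic := M.charpoly_monic
  have hdeg : χ.natDegree = s := by
    rw [hχdef, Matrix.charpoly_natDegree_eq_dim, Fintype.card_fin]
  have hT' : T * Φ = M * T + N * Γ := by
    rw [sub_eq_iff_eq_add] at hT
    rw [hT]; abel
  have hpow := syl_pow M Φ T (N * Γ) hT'
  set A := Polynomial.aeval Φ χ with hA
  set Ctrl := (Matrix.of fun i j : Fin s => ((M ^ (j:ℕ)) * N) i 0) with hCtrl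
  set U := (Matrix.of fun m j : Fin s => χ.coeff ((m:ℕ)+1+(j:ℕ))) with hU
  -- Step 1: the Sylvester identity applied to the characteristic polynomial of M
  have h1 : T * A = ∑ j ∈ Finset.range (s+1),
      (∑ m ∈ Finset.range (s - j), χ.coeff (j+1+m) • M ^ m) * (N*Γ) * Φ ^ j := by
    rw [hA, Polynomial.aeval_eq_sum_range, hdeg, Finset.mul_sum]
    have e1 : ∀ k ∈ Finset.range (s+1), T * (χ.coeff k • Φ ^ k)
        = χ.coeff k • (M ^ k * T)
          + ∑ j ∈ Finset.range k, χ.coeff k • (M ^ (k-1-j) * (N*Γ) * Φ ^ j) := by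
      intro k _
      rw [mul_smul_comm, hpow k, smul_add, Finset.smul_sum]
    rw [Finset.sum_congr rfl e1, Finset.sum_add_distrib]
    have e2 : ∑ k ∈ Finset.range (s+1), χ.coeff k • (M ^ k * T) = 0 := by
      have e2' : ∑ k ∈ Finset.range (s+1), χ.coeff k • (M ^ k * T)
          = (∑ k ∈ Finset.range (s+1), χ.coeff k • M ^ k) * T := by
        rw [Finset.sum_mul]
        exact Finset.sum_congr rfl fun k _ => (smul_mul_assoc _ _ _).symm
      rw [e2', show s + 1 = χ.natDegree + 1 by rw [hdeg],
        ← Polynomial.aeval_eq_sum_range, hχdef, Matrix.aeval_self_charpoly, zero_mul]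
    rw [e2, zero_add]
    have e3 : ∑ k ∈ Finset.range (s+1), ∑ j ∈ Finset.range k,
          χ.coeff k • (M ^ (k-1-j) * (N*Γ) * Φ ^ j)
        = ∑ j ∈ Finset.range (s+1), ∑ k ∈ Finset.Ico (j+1) (s+1),
          χ.coeff k • (M ^ (k-1-j) * (N*Γ) * Φ ^ j) := by
      simp only [Finset.range_eq_Ico]
      exact (Finset.sum_Ico_Ico_comm' 0 (s+1)
        (fun j k => χ.coeff k • (M ^ (k-1-j) * (N*Γ) * Φ ^ j))).symm
    rw [e3]
    refine Finset.sum_congr rfl fun j hj => ?_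
    rw [Finset.sum_Ico_eq_sum_range, show (s+1) - (j+1) = s - j by omega,
      Finset.sum_mul, Finset.sum_mul]
    refine Finset.sum_congr rfl fun m _ => ?_
    rw [smul_mul_assoc, smul_mul_assoc, show (j+1+m) - 1 - j = m by omega]
  have hgam := gamma_pow ϱ Φ hΦ Γ hΓ
  -- Step 2: entrywise identification with the controllability matrix times U
  have h2 : T * A = Ctrl * U := by
    rw [h1]
    ext i l
    rw [Matrix.sum_apply, Finset.sum_range_succ]
    have hlast : ((∑ m ∈ Finset.range (s - s), χ.coeff (s+1+m) • M ^ m) * (N*Γ) * Φ ^ s) i l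
        = 0 := by
      simp [Nat.sub_self]
    rw [hlast, add_zero]
    have e5 : ∀ j ∈ Finset.range s,
        ((∑ m ∈ Finset.range (s - j), χ.coeff (j+1+m) • M ^ m) * (N*Γ) * Φ ^ j) i l
        = (if (l:ℕ) = j
            then ((∑ m ∈ Finset.range (s - j), χ.coeff (j+1+m) • M ^ m) * N) i 0 else 0) := by
      intro j hj
      rw [← Matrix.mul_assoc _ N Γ, Matrix.mul_assoc _ Γ (Φ ^ j), Matrix.mul_apply,
        Fin.sum_univ_one, hgam j (Finset.mem_range.mp hj) l, mul_ite, mul_one, mul_zero]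
    rw [Finset.sum_congr rfl e5, Finset.sum_ite_eq (Finset.range s) ((l:ℕ)),
      if_pos (Finset.mem_range.mpr l.isLt)]
    -- LHS expand
    rw [Matrix.sum_mul, Matrix.sum_apply]
    have eL : ∀ m ∈ Finset.range (s - (l:ℕ)),
        ((χ.coeff ((l:ℕ)+1+m) • M ^ m) * N) i 0
        = ((M ^ m) * N) i 0 * χ.coeff (m+1+(l:ℕ)) := by
      intro m _
      rw [Matrix.smul_mul, Matrix.smul_apply, smul_eq_mul, mul_comm,
        show (l:ℕ)+1+m = m+1+(l:ℕ) by omega]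
    rw [Finset.sum_congr rfl eL]
    -- RHS expand
    rw [Matrix.mul_apply]
    simp only [hCtrl, hU, Matrix.of_apply]
    rw [Fin.sum_univ_eq_sum_range (fun m => ((M ^ m) * N) i 0 * χ.coeff (m+1+(l:ℕ))) s]
    refine Finset.sum_subset (Finset.range_subset_range.mpr (by omega)) ?_
    intro m hm hnm
    have : χ.natDegree < m + 1 + (l:ℕ) := by
      rw [hdeg]
      simp only [Finset.mem_range, not_lt] at hm hnm
      omega
    rw [Polynomial.coeff_eq_zero_of_natDegree_lt this, mul_zero]
  -- U has unit determinant
  have hUdet : IsUnit U.det := by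
    have hperm := Matrix.det_permute (Fin.revPerm) U
    have hV : (U.submatrix (Fin.revPerm : Equiv.Perm (Fin s)) id).det = 1 := by
      have htri : (U.submatrix (Fin.revPerm : Equiv.Perm (Fin s)) id).BlockTriangular
          OrderDual.toDual := by
        intro a b hab
        have hab' : (a:ℕ) < (b:ℕ) := hab
        simp only [Matrix.submatrix_apply, hU, Matrix.of_apply, id, Fin.revPerm_apply]
        apply Polynomial.coeff_eq_zero_of_natDegree_lt
        rw [hdeg, Fin.val_rev]
        have := a.isLt
        have := b.isLt
        omega
      rw [Matrix.det_of_lowerTriangular _ htri]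
      have hdiag : ∀ a : Fin s,
          (U.submatrix (Fin.revPerm : Equiv.Perm (Fin s)) id) a a = 1 := by
        intro a
        simp only [Matrix.submatrix_apply, hU, Matrix.of_apply, id, Fin.revPerm_apply]
        rw [Fin.val_rev, show s - ((a:ℕ)+1) + 1 + (a:ℕ) = s by omega, ← hdeg]
        exact hmonic.coeff_natDegree
      rw [Finset.prod_congr rfl (fun a _ => hdiag a), Finset.prod_const_one]
    rw [hV] at hperm
    exact IsUnit.of_mul_eq_one _ (by rw [mul_comm]; exact hperm.symm)
  have hAdet : IsUnit A.det := det_aeval_unit M Φ hM hrootsIm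
  have hdetmul : T.det * A.det = Ctrl.det * U.det := by
    rw [← Matrix.det_mul, ← Matrix.det_mul, h2]
  have hprod : IsUnit (T.det * A.det) := by rw [hdetmul]; exact hctrl.mul hUdet
  exact isUnit_of_mul_isUnit_left hprod
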